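/- Let P₀ be an n×n complex matrix and 𝐏 = [[0, P₀],[I, 0]] the associated 2n×2n companion matrix. Then 𝐏 is diagonalizable with real eigenvalues if and only if P₀ is diagonalizable with strictly positive real eigenvalues. -/

import Mathlib

open Matrix

def companionBlock {n : ℕ} (P₀ : Matrix (Fin n) (Fin n) ℂ) :
    Matrix (Fin n ⊕ Fin n) (Fin n ⊕ Fin n) ℂ :=
  Matrix.fromBlocks 0 P₀ 1 0

/-- `M` is diagonalizable over ℂ with eigenvalues satisfying predicate `pred` on ℝ
    (all eigenvalues are real and satisfy `pred`). -/
def IsRealDiagonalizable {m : Type*} [Fintype m] [DecidableEq m]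
    (M : Matrix m m ℂ) (pred : ℝ → Prop) : Prop :=
  ∃ (S : Matrix m m ℂ) (d : m → ℝ), IsUnit S.det ∧ (∀ i, pred (d i)) ∧
    M = S * Matrix.diagonal (fun i => (d i : ℂ)) * S⁻¹

/-- If a family of eigenvectors (with real eigenvalues satisfying `pred`) spans, then
the matrix is real-diagonalizable. -/
lemma isRealDiagonalizable_of_eigen {m : Type*} [Fintype m] [DecidableEq m] (M : Matrix m m ℂ)
    (pred : ℝ → Prop) {ι : Type*} (v : ι → (m → ℂ)) (μ : ι → ℝ)
    (hpred : ∀ i, pred (μ i))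
    (heig : ∀ i, M.mulVec (v i) = (μ i : ℂ) • v i)
    (hspan : Submodule.span ℂ (Set.range v) = ⊤) :
    IsRealDiagonalizable M pred := by
  classical
  have hli : LinearIndepOn ℂ id (∅ : Set (m → ℂ)) :=
    linearIndepOn_empty ℂ _
  have hsub : (∅ : Set (m → ℂ)) ⊆ Set.range v := Set.empty_subset _
  set bset := hli.extend hsub with hbset
  have hspanb : Submodule.span ℂ bset = ⊤ := by
    rw [hli.span_extend_eq_span hsub, hspan]
  let B : Module.Basis bset ℂ (m → ℂ) :=
    Module.Basis.mk (hli.linearIndepOn_extend hsub).linearIndependent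
      (by simpa [hbset] using hspanb.ge)
  let e : bset ≃ m := B.indexEquiv (Pi.basisFun ℂ m)
  let c : Module.Basis m ℂ (m → ℂ) := B.reindex e
  have hc : ∀ j, ∃ i, v i = c j := by
    intro j
    have : (c j : m → ℂ) ∈ bset := by
      have : c j = B (e.symm j) := by rw [Module.Basis.reindex_apply]
      rw [this, Module.Basis.mk_apply]
      exact (e.symm j).2
    exact (hli.extend_subset hsub this).imp (fun i hi => hi)
  choose k hk using hc
  set S : Matrix m m ℂ := (Pi.basisFun ℂ m).toMatrix c with hSdef
  have hSinv : Invertible S := (Pi.basisFun ℂ m).invertibleToMatrix c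
  have hS : IsUnit S.det := Matrix.isUnit_det_of_invertible S
  have hSij : ∀ i j, S i j = c j i := by
    intro i j
    rw [hSdef, Module.Basis.toMatrix_apply, Pi.basisFun_repr]
  have hMS : M * S = S * Matrix.diagonal (fun j => ((μ (k j) : ℝ) : ℂ)) := by
    ext i j
    have h := congrFun (heig (k j)) i
    rw [hk j] at h
    have hL : (M * S) i j = (M.mulVec (c j)) i := by
      simp [Matrix.mul_apply, Matrix.mulVec, dotProduct, hSij]
    rw [hL, h, Matrix.mul_diagonal, hSij]
    simp [mul_comm]
  refine ⟨S, fun j => μ (k j), hS, fun j => hpred _, ?_⟩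
  have h1 : S * S⁻¹ = 1 := Matrix.mul_nonsing_inv S hS
  calc M = M * (S * S⁻¹) := by rw [h1, mul_one]
    _ = (M * S) * S⁻¹ := by rw [Matrix.mul_assoc]
    _ = S * Matrix.diagonal (fun j => ((μ (k j) : ℝ) : ℂ)) * S⁻¹ := by rw [hMS]


/-- Any vector is a linear combination of the columns of an invertible matrix. -/
lemma col_rep {m : Type*} [Fintype m] [DecidableEq m] {S : Matrix m m ℂ}
    (hS : IsUnit S.det) (x : m → ℂ) :
    x = ∑ j, (S⁻¹ *ᵥ x) j • (fun i => S i j) := by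
  funext i
  have hx : S *ᵥ (S⁻¹ *ᵥ x) = x := by
    rw [Matrix.mulVec_mulVec, Matrix.mul_nonsing_inv _ hS, Matrix.one_mulVec]
  calc x i = (S *ᵥ (S⁻¹ *ᵥ x)) i := by rw [hx]
    _ = ∑ j, S i j * (S⁻¹ *ᵥ x) j := rfl
    _ = _ := by simp [Finset.sum_apply, mul_comm]

/-- Columns of `S` are eigenvectors of `M = S D S⁻¹`. -/
lemma eigen_cols {m : Type*} [Fintype m] [DecidableEq m] {M S : Matrix m m ℂ} {d : m → ℝ}
    (hS : IsUnit S.det) (hM : M = S * Matrix.diagonal (fun i => (d i : ℂ)) * S⁻¹) (j : m) :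
    M.mulVec (fun i => S i j) = ((d j : ℝ) : ℂ) • (fun i => S i j) := by
  have hMS : M * S = S * Matrix.diagonal (fun i => (d i : ℂ)) := by
    rw [hM, Matrix.mul_assoc, Matrix.nonsing_inv_mul _ hS, mul_one]
  funext i
  have h1 : (M.mulVec (fun i => S i j)) i = (M * S) i j := by
    simp [Matrix.mul_apply, Matrix.mulVec, dotProduct]
  rw [h1, hMS, Matrix.mul_diagonal]
  simp [mul_comm]

theorem stmt6 {n : ℕ} (P₀ : Matrix (Fin n) (Fin n) ℂ) :
    IsRealDiagonalizable (companionBlock P₀) (fun _ => True) ↔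
    IsRealDiagonalizable P₀ (fun x => 0 < x) := by
  constructor
  · rintro ⟨S, d, hS, -, hM⟩
    classical
    have hSS : ∀ y : Fin n ⊕ Fin n → ℂ, S⁻¹ *ᵥ (S *ᵥ y) = y := by
      intro y
      rw [Matrix.mulVec_mulVec, Matrix.nonsing_inv_mul _ hS, Matrix.one_mulVec]
    have hfb : ∀ (f g : Fin n → ℂ),
        (companionBlock P₀) *ᵥ (Sum.elim f g) = Sum.elim (P₀ *ᵥ g) f := by
      intro f g
      rw [companionBlock, Matrix.fromBlocks_mulVec]
      simp
    -- Step 1: P₀ is injective on mulVec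
    have hinj : ∀ x : Fin n → ℂ, P₀ *ᵥ x = 0 → x = 0 := by
      intro x hx
      set w : Fin n ⊕ Fin n → ℂ := Sum.elim x 0 with hwdef
      have h1 : (companionBlock P₀) *ᵥ w = Sum.elim (0 : Fin n → ℂ) x := by
        rw [hwdef, hfb]
        funext i; cases i <;> simp
      have h2 : (companionBlock P₀) *ᵥ ((companionBlock P₀) *ᵥ w) = 0 := by
        rw [h1, hfb]
        funext i; cases i <;> simp [hx]
      set u : Fin n ⊕ Fin n → ℂ := S⁻¹ *ᵥ w with hudef
      have h3 : (companionBlock P₀) *ᵥ w =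
          S *ᵥ (Matrix.diagonal (fun i => (d i : ℂ)) *ᵥ u) := by
        rw [hM, hudef]
        simp only [← Matrix.mulVec_mulVec]
      have h4 : Matrix.diagonal (fun i => (d i : ℂ)) *ᵥ
          (Matrix.diagonal (fun i => (d i : ℂ)) *ᵥ u) = 0 := by
        have h5 : (companionBlock P₀) *ᵥ ((companionBlock P₀) *ᵥ w) =
            S *ᵥ (Matrix.diagonal (fun i => (d i : ℂ)) *ᵥ
              (Matrix.diagonal (fun i => (d i : ℂ)) *ᵥ u)) := by
          rw [h3, hM]
          simp only [← Matrix.mulVec_mulVec]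
          rw [hSS]
        have h6 := h5.symm.trans h2
        have h7 : S⁻¹ *ᵥ (S *ᵥ (Matrix.diagonal (fun i => (d i : ℂ)) *ᵥ
            (Matrix.diagonal (fun i => (d i : ℂ)) *ᵥ u))) = S⁻¹ *ᵥ 0 := by rw [h6]
        rw [hSS, Matrix.mulVec_zero] at h7
        exact h7
      have h8 : Matrix.diagonal (fun i => (d i : ℂ)) *ᵥ u = 0 := by
        funext i
        have := congrFun h4 i
        rw [Matrix.mulVec_diagonal, Matrix.mulVec_diagonal] at this
        simp only [Pi.zero_apply] at this ⊢
        rw [Matrix.mulVec_diagonal]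
        rcases mul_eq_zero.1 this with h | h
        · rw [h, zero_mul]
        · exact h
      have h9 : (companionBlock P₀) *ᵥ w = 0 := by
        rw [h3, h8, Matrix.mulVec_zero]
      rw [h1] at h9
      funext i
      exact congrFun h9 (Sum.inr i)
    -- Step 2: all d j ≠ 0
    have hdne : ∀ j, d j ≠ 0 := by
      intro j hdj
      set col : Fin n ⊕ Fin n → ℂ := fun i => S i j with hcoldef
      have hcol0 : col ≠ 0 := by
        intro h0
        have h1 : S *ᵥ Pi.single j 1 = col := by
          rw [Matrix.mulVec_single]
          funext i; simp [hcoldef]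
        have h2 : (Pi.single j 1 : Fin n ⊕ Fin n → ℂ) = 0 := by
          rw [← hSS (Pi.single j 1), h1, h0, Matrix.mulVec_zero]
        have := congrFun h2 j
        simp at this
      have heigj : (companionBlock P₀) *ᵥ col = ((d j : ℝ) : ℂ) • col :=
        eigen_cols hS hM j
      rw [hdj] at heigj
      have hcs : col = Sum.elim (fun i => col (Sum.inl i)) (fun i => col (Sum.inr i)) := by
        funext i; cases i <;> rfl
      have h1 : (companionBlock P₀) *ᵥ col =
          Sum.elim (P₀ *ᵥ (fun i => col (Sum.inr i))) (fun i => col (Sum.inl i)) := by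
        conv_lhs => rw [hcs, hfb]
      have h2 : (companionBlock P₀) *ᵥ col = 0 := by
        rw [heigj]
        funext i; simp
      rw [h1] at h2
      have ha : (fun i => col (Sum.inl i)) = (0 : Fin n → ℂ) := by
        funext i; exact congrFun h2 (Sum.inr i)
      have hbeq : P₀ *ᵥ (fun i => col (Sum.inr i)) = 0 := by
        funext i; exact congrFun h2 (Sum.inl i)
      have hb : (fun i => col (Sum.inr i)) = (0 : Fin n → ℂ) := hinj _ hbeq
      apply hcol0
      funext i
      cases i with
      | inl i => exact congrFun ha i
      | inr i => exact congrFun hb i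
    -- Step 3: eigenvector family for P₀
    set v : (Fin n ⊕ Fin n) → (Fin n → ℂ) := fun j i => S (Sum.inl i) j with hvdef
    have heigP : ∀ j, P₀ *ᵥ (v j) = ((d j ^ 2 : ℝ) : ℂ) • (v j) := by
      intro j
      set col : Fin n ⊕ Fin n → ℂ := fun i => S i j with hcoldef
      set a : Fin n → ℂ := fun i => col (Sum.inl i) with hadef
      set b : Fin n → ℂ := fun i => col (Sum.inr i) with hbdef
      have heigj : (companionBlock P₀) *ᵥ col = ((d j : ℝ) : ℂ) • col :=
        eigen_cols hS hM j
      have hcs : col = Sum.elim a b := by funext i; cases i <;> rfl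
      have h1 : Sum.elim (P₀ *ᵥ b) a = ((d j : ℝ) : ℂ) • col := by
        rw [← hfb a b, ← hcs]
        exact heigj
      have e1 : P₀ *ᵥ b = ((d j : ℝ) : ℂ) • a := by
        funext i
        have := congrFun h1 (Sum.inl i)
        simpa [hcs] using this
      have e2 : a = ((d j : ℝ) : ℂ) • b := by
        funext i
        have := congrFun h1 (Sum.inr i)
        simpa [hcs] using this
      have hva : v j = a := by funext i; rfl
      rw [hva, e2, Matrix.mulVec_smul, e1, smul_smul, ← e2]
      congr 1
      push_cast
      ring
    have hspan : Submodule.span ℂ (Set.range v) = ⊤ := by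
      rw [eq_top_iff]
      intro x _
      have hrep := col_rep hS (Sum.elim x (0 : Fin n → ℂ))
      set y := S⁻¹ *ᵥ (Sum.elim x (0 : Fin n → ℂ)) with hydef
      have hx : x = ∑ j, y j • v j := by
        funext i
        have h := congrFun hrep (Sum.inl i)
        simp only [Sum.elim_inl, Finset.sum_apply, Pi.smul_apply] at h ⊢
        exact h
      rw [hx]
      exact Submodule.sum_mem _ fun j _ =>
        Submodule.smul_mem _ _ (Submodule.subset_span ⟨j, rfl⟩)
    exact isRealDiagonalizable_of_eigen _ _ v (fun j => d j ^ 2)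
      (fun j => pow_two_pos_of_ne_zero (hdne j)) heigP hspan
  · rintro ⟨S, d, hS, hpos, hM⟩
    classical
    set col : Fin n → (Fin n → ℂ) := fun j i => S i j with hcoldef
    set l : Fin n → ℝ := fun j => Real.sqrt (d j) with hldef
    have hl2 : ∀ j, ((l j : ℂ)) * (l j : ℂ) = ((d j : ℝ) : ℂ) := by
      intro j
      rw [← Complex.ofReal_mul]
      norm_cast
      exact Real.mul_self_sqrt (le_of_lt (hpos j))
    have hlne : ∀ j, ((l j : ℝ) : ℂ) ≠ 0 := by
      intro j
      simp only [ne_eq, Complex.ofReal_eq_zero]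
      exact ne_of_gt (Real.sqrt_pos.2 (hpos j))
    set v : (Fin n ⊕ Fin n) → (Fin n ⊕ Fin n → ℂ) :=
      Sum.elim (fun j => Sum.elim (((l j : ℝ) : ℂ) • col j) (col j))
               (fun j => Sum.elim (((-l j : ℝ) : ℂ) • col j) (col j)) with hvdef
    set μ : (Fin n ⊕ Fin n) → ℝ := Sum.elim l (fun j => -l j) with hμdef
    -- eigen condition
    have heig : ∀ i, (companionBlock P₀).mulVec (v i) = ((μ i : ℝ) : ℂ) • v i := by
      intro i
      have hfb : ∀ (f g : Fin n → ℂ),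
          (companionBlock P₀) *ᵥ (Sum.elim f g) = Sum.elim (P₀ *ᵥ g) f := by
        intro f g
        rw [companionBlock, Matrix.fromBlocks_mulVec]
        simp
      cases i with
      | inl j =>
        show (companionBlock P₀) *ᵥ (Sum.elim (((l j : ℝ) : ℂ) • col j) (col j)) = _
        rw [hfb, eigen_cols hS hM j]
        funext i'
        cases i' with
        | inl i' => simp only [hvdef, hμdef, Sum.elim_inl, Sum.elim_inr, Pi.smul_apply, Pi.add_apply, Pi.sub_apply, Pi.zero_apply, smul_eq_mul, Complex.ofReal_neg]; rw [← hl2 j]; ring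
        | inr i' => simp only [hvdef, hμdef, Sum.elim_inl, Sum.elim_inr, Pi.smul_apply, Pi.add_apply, Pi.sub_apply, Pi.zero_apply, smul_eq_mul, Complex.ofReal_neg]
      | inr j =>
        show (companionBlock P₀) *ᵥ (Sum.elim (((-l j : ℝ) : ℂ) • col j) (col j)) = _
        rw [hfb, eigen_cols hS hM j]
        funext i'
        cases i' with
        | inl i' => simp only [hvdef, hμdef, Sum.elim_inl, Sum.elim_inr, Pi.smul_apply, Pi.add_apply, Pi.sub_apply, Pi.zero_apply, smul_eq_mul, Complex.ofReal_neg]; rw [← hl2 j]; ring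
        | inr i' => simp only [hvdef, hμdef, Sum.elim_inl, Sum.elim_inr, Pi.smul_apply, Pi.add_apply, Pi.sub_apply, Pi.zero_apply, smul_eq_mul, Complex.ofReal_neg]
    -- span condition
    have hspan : Submodule.span ℂ (Set.range v) = ⊤ := by
      rw [eq_top_iff]
      intro x _
      set W := Submodule.span ℂ (Set.range v)
      have hA : ∀ j, Sum.elim (col j) (0 : Fin n → ℂ) ∈ W := by
        intro j
        have key : Sum.elim (col j) (0 : Fin n → ℂ) =
            ((2 * (l j : ℂ))⁻¹) • (v (Sum.inl j) - v (Sum.inr j)) := by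
          funext i'
          cases i' with
          | inl i' =>
            simp only [hvdef, hμdef, Sum.elim_inl, Sum.elim_inr, Pi.smul_apply, Pi.add_apply, Pi.sub_apply, Pi.zero_apply, smul_eq_mul, Complex.ofReal_neg]
            field_simp [hlne j]
            ring
          | inr i' => simp only [hvdef, hμdef, Sum.elim_inl, Sum.elim_inr, Pi.smul_apply, Pi.add_apply, Pi.sub_apply, Pi.zero_apply, smul_eq_mul, Complex.ofReal_neg]; ring
        rw [key]
        exact Submodule.smul_mem _ _ (Submodule.sub_mem _
          (Submodule.subset_span ⟨Sum.inl j, rfl⟩) (Submodule.subset_span ⟨Sum.inr j, rfl⟩))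
      have hB : ∀ j, Sum.elim (0 : Fin n → ℂ) (col j) ∈ W := by
        intro j
        have key : Sum.elim (0 : Fin n → ℂ) (col j) =
            ((2 : ℂ))⁻¹ • (v (Sum.inl j) + v (Sum.inr j)) := by
          funext i'
          cases i' with
          | inl i' =>
            simp only [hvdef, hμdef, Sum.elim_inl, Sum.elim_inr, Pi.smul_apply, Pi.add_apply, Pi.sub_apply, Pi.zero_apply, smul_eq_mul, Complex.ofReal_neg]
            ring
          | inr i' =>
            simp only [hvdef, hμdef, Sum.elim_inl, Sum.elim_inr, Pi.smul_apply, Pi.add_apply, Pi.sub_apply, Pi.zero_apply, smul_eq_mul, Complex.ofReal_neg]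
            ring
        rw [key]
        exact Submodule.smul_mem _ _ (Submodule.add_mem _
          (Submodule.subset_span ⟨Sum.inl j, rfl⟩) (Submodule.subset_span ⟨Sum.inr j, rfl⟩))
      set x₁ : Fin n → ℂ := fun i => x (Sum.inl i)
      set x₂ : Fin n → ℂ := fun i => x (Sum.inr i)
      have hx : x = (∑ j, (S⁻¹ *ᵥ x₁) j • Sum.elim (col j) (0 : Fin n → ℂ)) +
          (∑ j, (S⁻¹ *ᵥ x₂) j • Sum.elim (0 : Fin n → ℂ) (col j)) := by
        funext i'
        cases i' with
        | inl i' =>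
          have h1 := congrFun (col_rep hS x₁) i'
          simp only [Finset.sum_apply, Pi.smul_apply] at h1 ⊢
          simp only [Pi.add_apply, Finset.sum_apply, Pi.smul_apply, Sum.elim_inl,
            Pi.zero_apply, smul_zero, Finset.sum_const_zero, add_zero]
          exact h1
        | inr i' =>
          have h1 := congrFun (col_rep hS x₂) i'
          simp only [Finset.sum_apply, Pi.smul_apply] at h1 ⊢
          simp only [Pi.add_apply, Finset.sum_apply, Pi.smul_apply, Sum.elim_inr,
            Pi.zero_apply, smul_zero, Finset.sum_const_zero, zero_add]
          exact h1
      rw [hx]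
      exact Submodule.add_mem _
        (Submodule.sum_mem _ fun j _ => Submodule.smul_mem _ _ (hA j))
        (Submodule.sum_mem _ fun j _ => Submodule.smul_mem _ _ (hB j))
    exact isRealDiagonalizable_of_eigen _ _ v μ (fun _ => trivial) heig hspan
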